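/- Let V : ℝ → ℝ be bounded and continuous and E real. Let u solve −u″ + Vu = Eu on [0,∞) with u(0) = 0 and u not identically zero, and let v be twice continuously differentiable with −v″ + Vv = Ev + u on [0,∞) and v(0) = v′(0) = 0. If x₀ > 0 and u(x₀) = 0, then v(x₀)·u′(x₀) = ∫₀^{x₀} u(x)² dx. (In particular, since u′(x₀) ≠ 0, the zero x₀(E) of u(·,E) is strictly decreasing in E.) -/

import Mathlib

open Set

/-- Let `u` solve `−u″ + Vu = Eu` on `[0,∞)` with `u(0) = 0`, not
identically zero, and let `v` (which arises as `∂u/∂E`) satisfy the inhomogeneous equation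
`−v″ + Vv = Ev + u` on `[0,∞)` with `v(0) = v′(0) = 0`. If `x₀ > 0` and `u(x₀) = 0`, then
`v(x₀)·u′(x₀) = ∫₀^{x₀} u(x)² dx`. -/
theorem energy_derivative_at_zero (V : ℝ → ℝ) (hVb : ∃ M, ∀ x, |V x| ≤ M)
    (hVc : Continuous V) (E : ℝ) (u v : ℝ → ℝ)
    (hu : ContDiff ℝ 2 u)
    (hodeu : ∀ x ∈ Ici (0 : ℝ), deriv (deriv u) x = (V x - E) * u x)
    (hu0 : u 0 = 0) (hunz : ∃ x ∈ Ici (0 : ℝ), u x ≠ 0)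
    (hv : ContDiff ℝ 2 v)
    (hodev : ∀ x ∈ Ici (0 : ℝ), deriv (deriv v) x = (V x - E) * v x - u x)
    (hv0 : v 0 = 0) (hv0' : deriv v 0 = 0)
    (x₀ : ℝ) (hx₀ : 0 < x₀) (hux₀ : u x₀ = 0) :
    v x₀ * deriv u x₀ = ∫ x in (0 : ℝ)..x₀, (u x) ^ 2 := by

  have hud : Differentiable ℝ u := hu.differentiable (by norm_num)
  have hvd : Differentiable ℝ v := hv.differentiable (by norm_num)
  have hud' : Differentiable ℝ (deriv u) := by
    have h : ContDiff ℝ (1+1) u := by exact_mod_cast hu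
    exact (contDiff_succ_iff_deriv.mp h).2.2.differentiable (by norm_num)
  have hvd' : Differentiable ℝ (deriv v) := by
    have h : ContDiff ℝ (1+1) v := by exact_mod_cast hv
    exact (contDiff_succ_iff_deriv.mp h).2.2.differentiable (by norm_num)
  set W : ℝ → ℝ := fun x => deriv u x * v x - u x * deriv v x with hW
  have key : ∀ x ∈ uIcc (0:ℝ) x₀, HasDerivAt W ((u x) ^ 2) x := by
    intro x hx
    have hx0 : x ∈ Ici (0:ℝ) := by
      rw [uIcc_of_le hx₀.le] at hx
      exact hx.1
    have h1 : HasDerivAt (deriv u) ((V x - E) * u x) x := by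
      have := (hud' x).hasDerivAt
      rwa [hodeu x hx0] at this
    have h2' : HasDerivAt (deriv v) ((V x - E) * v x - u x) x := by
      have := (hvd' x).hasDerivAt
      rwa [hodev x hx0] at this
    have h3 : HasDerivAt u (deriv u x) x := (hud x).hasDerivAt
    have h4 : HasDerivAt v (deriv v x) x := (hvd x).hasDerivAt
    have := (h1.mul h4).sub (h3.mul h2')
    refine this.congr_deriv ?_
    ring
  have hint : IntervalIntegrable (fun x => (u x) ^ 2) MeasureTheory.volume 0 x₀ :=
    (Continuous.pow (hu.continuous) 2).intervalIntegrable 0 x₀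
  have := intervalIntegral.integral_eq_sub_of_hasDerivAt key hint
  rw [this, hW]
  simp [hu0, hv0, hux₀]
  ring
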